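/- Let 𝒯 be a finite list of half-open rectangular tiles in ℝ² and let μ be a probability measure on Y_𝒯 invariant under the translation action (S_v)_{v∈ℝ²}. If μ is ergodic for the horizontal flow (S_{t e₁})_{t∈ℝ} and ergodic for the vertical flow (S_{t e₂})_{t∈ℝ}, then the set of tilings containing an infinite (semi-infinite or bi-infinite) shear is μ-null. -/

import Mathlib

open Set MeasureTheory

namespace Tiling2

/-- Points of the plane. -/
abbrev Pt : Type := ℝ × ℝ

/-- The half-open rectangle `[0, w) × [0, h)`. -/
def rect (w h : ℝ) : Set Pt := Ico (0 : ℝ) w ×ˢ Ico (0 : ℝ) h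

/-- `P ⊆ ℝ² × Fin k` is a tiling of `ℝ²` by the half-open rectangles with sizes
`sz : Fin k → ℝ × ℝ` (width, height) if the translated rectangles
`{p + rect (sz i) : (p, i) ∈ P}` partition `ℝ²`: every point lies in exactly one. -/
def IsTiling {k : ℕ} (sz : Fin k → ℝ × ℝ) (P : Set (Pt × Fin k)) : Prop :=
  ∀ x : Pt, ∃! q : Pt × Fin k, q ∈ P ∧ x - q.1 ∈ rect (sz q.2).1 (sz q.2).2

/-- The space `Y_𝒯` of all tilings of `ℝ²` by the tiles with sizes `sz`. -/
def Tilings {k : ℕ} (sz : Fin k → ℝ × ℝ) : Type := {P : Set (Pt × Fin k) // IsTiling sz P}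

/-- The σ-algebra on `Y_𝒯` generated by the sets
`{P : some (p,i) ∈ P has p ∈ U and i = j}`, for `U ⊆ ℝ²` open and `j : Fin k`. -/
instance instMS {k : ℕ} (sz : Fin k → ℝ × ℝ) : MeasurableSpace (Tilings sz) :=
  MeasurableSpace.generateFrom
    {s | ∃ (U : Set Pt) (j : Fin k), IsOpen U ∧
      s = {P : Tilings sz | ∃ q ∈ P.val, q.1 ∈ U ∧ q.2 = j}}

/-- Translation `S_v P = {(p - v, i) : (p, i) ∈ P}` on sets of placed tiles. -/
def trSet {k : ℕ} (v : Pt) (P : Set (Pt × Fin k)) : Set (Pt × Fin k) :=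
  (fun q : Pt × Fin k => (q.1 - v, q.2)) '' P

theorem IsTiling.trSet {k : ℕ} {sz : Fin k → ℝ × ℝ} {P : Set (Pt × Fin k)}
    (h : IsTiling sz P) (v : Pt) : IsTiling sz (Tiling2.trSet v P) := by
  intro x
  obtain ⟨q, ⟨hqP, hqx⟩, huniq⟩ := h (x + v)
  refine ⟨(q.1 - v, q.2), ⟨⟨q, hqP, rfl⟩, ?_⟩, ?_⟩
  · have hx : x - (q.1 - v) = x + v - q.1 := by abel
    rw [hx]; exact hqx
  · rintro r ⟨⟨s, hsP, rfl⟩, hrx⟩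
    have h2 : s = q := by
      refine huniq s ⟨hsP, ?_⟩
      have hx : x + v - s.1 = x - (s.1 - v) := by abel
      rw [hx]; exact hrx
    rw [h2]

/-- The translation action `S_v` on the space of tilings. -/
def S {k : ℕ} (sz : Fin k → ℝ × ℝ) (v : Pt) (x : Tilings sz) : Tilings sz :=
  ⟨trSet v x.1, x.2.trSet v⟩

/-- The closed placed tile (closure of the placed half-open rectangle) of `q = (p, i)`. -/
def closedTile {k : ℕ} (sz : Fin k → ℝ × ℝ) (q : Pt × Fin k) : Set Pt :=
  Icc q.1.1 (q.1.1 + (sz q.2).1) ×ˢ Icc q.1.2 (q.1.2 + (sz q.2).2)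

/-- The union of the boundaries of the placed tiles of `P`. -/
def bdry {k : ℕ} (sz : Fin k → ℝ × ℝ) (P : Set (Pt × Fin k)) : Set Pt :=
  ⋃ q ∈ P, frontier (closedTile sz q)

/-- The four closed faces of the placed tile `q`. -/
def faces {k : ℕ} (sz : Fin k → ℝ × ℝ) (q : Pt × Fin k) : Set (Set Pt) :=
  { ({q.1.1} : Set ℝ) ×ˢ Icc q.1.2 (q.1.2 + (sz q.2).2),
    ({q.1.1 + (sz q.2).1} : Set ℝ) ×ˢ Icc q.1.2 (q.1.2 + (sz q.2).2),
    Icc q.1.1 (q.1.1 + (sz q.2).1) ×ˢ ({q.1.2} : Set ℝ),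
    Icc q.1.1 (q.1.1 + (sz q.2).1) ×ˢ ({q.1.2 + (sz q.2).2} : Set ℝ) }

/-- `e` is a shared edge of `P`: a common closed face of two distinct placed tiles. -/
def SharedEdge {k : ℕ} (sz : Fin k → ℝ × ℝ) (P : Set (Pt × Fin k)) (e : Set Pt) : Prop :=
  ∃ q ∈ P, ∃ q' ∈ P, q ≠ q' ∧ e ∈ faces sz q ∧ e ∈ faces sz q'

/-- `ℓ` is a (nonempty) horizontal segment: `I × {y}` with `I` a nonempty interval. -/
def IsHSeg (ℓ : Set Pt) : Prop :=
  ∃ (I : Set ℝ) (y : ℝ), I.Nonempty ∧ Convex ℝ I ∧ ℓ = I ×ˢ ({y} : Set ℝ)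

/-- `ℓ` is a (nonempty) vertical segment: `{a} × I` with `I` a nonempty interval. -/
def IsVSeg (ℓ : Set Pt) : Prop :=
  ∃ (a : ℝ) (I : Set ℝ), I.Nonempty ∧ Convex ℝ I ∧ ℓ = ({a} : Set ℝ) ×ˢ I

/-- `ℓ` contains no shared edge of `P`. -/
def NoSharedEdgeWithin {k : ℕ} (sz : Fin k → ℝ × ℝ) (P : Set (Pt × Fin k))
    (ℓ : Set Pt) : Prop :=
  ∀ e : Set Pt, SharedEdge sz P e → ¬e ⊆ ℓ

/-- `ℓ` is a shear of `P`: a maximal horizontal or vertical segment contained in the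
union of the boundaries of the placed tiles and containing no shared edge. -/
def IsShear {k : ℕ} (sz : Fin k → ℝ × ℝ) (P : Set (Pt × Fin k)) (ℓ : Set Pt) : Prop :=
  (IsHSeg ℓ ∨ IsVSeg ℓ) ∧ ℓ ⊆ bdry sz P ∧ NoSharedEdgeWithin sz P ℓ ∧
    ∀ ℓ' : Set Pt, (IsHSeg ℓ' ∨ IsVSeg ℓ') → ℓ' ⊆ bdry sz P →
      NoSharedEdgeWithin sz P ℓ' → ℓ ⊆ ℓ' → ℓ' = ℓ

/-- `ℓ` is a closed half-line (horizontal or vertical). -/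
def SemiInfinite (ℓ : Set Pt) : Prop :=
  (∃ y a : ℝ, ℓ = Ici a ×ˢ ({y} : Set ℝ) ∨ ℓ = Iic a ×ˢ ({y} : Set ℝ)) ∨
    (∃ x a : ℝ, ℓ = ({x} : Set ℝ) ×ˢ Ici a ∨ ℓ = ({x} : Set ℝ) ×ˢ Iic a)

/-- `ℓ` is a full (horizontal or vertical) line. -/
def BiInfinite (ℓ : Set Pt) : Prop :=
  (∃ y : ℝ, ℓ = (univ : Set ℝ) ×ˢ ({y} : Set ℝ)) ∨
    (∃ x : ℝ, ℓ = ({x} : Set ℝ) ×ˢ (univ : Set ℝ))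

end Tiling2

open Tiling2

set_option linter.unusedSectionVars false

namespace TP
open Tiling2 Metric Bornology Filter
open scoped ENNReal

variable {k : ℕ} {sz : Fin k → ℝ × ℝ}

def htile (sz : Fin k → ℝ × ℝ) (q : Pt × Fin k) : Set Pt :=
  Ico q.1.1 (q.1.1 + (sz q.2).1) ×ˢ Ico q.1.2 (q.1.2 + (sz q.2).2)

lemma mem_htile {q : Pt × Fin k} {z : Pt} :
    z ∈ htile sz q ↔ z - q.1 ∈ rect (sz q.2).1 (sz q.2).2 := by
  simp only [htile, rect, Set.mem_prod, mem_Ico, Prod.fst_sub, Prod.snd_sub]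
  constructor <;> rintro ⟨⟨h1, h2⟩, h3, h4⟩ <;> refine ⟨⟨?_, ?_⟩, ?_, ?_⟩ <;> linarith

lemma htile_disjoint {P : Set (Pt × Fin k)} (h : IsTiling sz P) {q q' : Pt × Fin k}
    (hq : q ∈ P) (hq' : q' ∈ P) (hne : q ≠ q') : Disjoint (htile sz q) (htile sz q') := by
  rw [Set.disjoint_left]
  intro z hz hz'
  obtain ⟨w, -, hu⟩ := h z
  exact hne ((hu q ⟨hq, mem_htile.1 hz⟩).trans (hu q' ⟨hq', mem_htile.1 hz'⟩).symm)

lemma volume_htile (q : Pt × Fin k) :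
    volume (htile sz q) = ENNReal.ofReal (sz q.2).1 * ENNReal.ofReal (sz q.2).2 := by
  rw [htile, Measure.volume_eq_prod, Measure.prod_prod, Real.volume_Ico, Real.volume_Ico]
  simp

section Bounds
variable (hsz : ∀ j, 0 < (sz j).1 ∧ 0 < (sz j).2)
variable {W H δ : ℝ} (hW : ∀ j, (sz j).1 ≤ W) (hH : ∀ j, (sz j).2 ≤ H)
variable (hδ : 0 < δ) (hδle : ∀ j, δ ≤ (sz j).1 * (sz j).2)

include hsz hδle in
lemma card_mul_le (x : Tilings sz) (F : Finset (Pt × Fin k)) (hF : ∀ q ∈ F, q ∈ x.val)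
    (B : Set Pt) (hB : ∀ q ∈ F, htile sz q ⊆ B) :
    (F.card : ℝ≥0∞) * ENNReal.ofReal δ ≤ volume B := by
  have hdisj : (↑F : Set (Pt × Fin k)).PairwiseDisjoint (htile sz) := fun a ha b hb hab =>
    htile_disjoint x.2 (hF a ha) (hF b hb) hab
  have h1 : ∑ q ∈ F, volume (htile sz q) = volume (⋃ q ∈ F, htile sz q) :=
    (measure_biUnion_finset hdisj fun q _ => measurableSet_Ico.prod measurableSet_Ico).symm
  calc (F.card : ℝ≥0∞) * ENNReal.ofReal δ = ∑ _q ∈ F, ENNReal.ofReal δ := by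
        rw [Finset.sum_const, nsmul_eq_mul]
    _ ≤ ∑ q ∈ F, volume (htile sz q) := Finset.sum_le_sum fun q _ => by
        rw [volume_htile, ← ENNReal.ofReal_mul (le_of_lt (hsz q.2).1)]
        exact ENNReal.ofReal_le_ofReal (hδle q.2)
    _ = volume (⋃ q ∈ F, htile sz q) := h1
    _ ≤ volume B := measure_mono (Set.iUnion₂_subset hB)

variable (hW0 : 0 ≤ W) (hH0 : 0 ≤ H)

include hsz hW hH hW0 hH0 in
lemma htile_subset_ball (q : Pt × Fin k) {c : Pt} {R : ℝ} (hq : q.1 ∈ closedBall c R) :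
    htile sz q ⊆ closedBall c (R + (W + H)) := by
  intro z hz
  rw [htile, Set.mem_prod, mem_Ico, mem_Ico] at hz
  have h1 := hW q.2; have h2 := hH q.2
  have h3 := (hsz q.2).1; have h4 := (hsz q.2).2
  rw [mem_closedBall] at hq ⊢
  calc dist z c ≤ dist z q.1 + dist q.1 c := dist_triangle _ _ _
    _ ≤ (W + H) + R := by
        refine add_le_add ?_ hq
        rw [Prod.dist_eq]
        refine max_le ?_ ?_ <;> rw [Real.dist_eq, abs_le] <;>
          constructor <;> linarith [hz.1.1, hz.1.2, hz.2.1, hz.2.2]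
    _ = R + (W + H) := by ring

include hsz hW hH hδ hδle hW0 hH0 in
lemma finite_tiles_in (x : Tilings sz) {A : Set Pt} (hA : IsBounded A) :
    {q : Pt × Fin k | q ∈ x.val ∧ q.1 ∈ A}.Finite := by
  by_contra hinf
  replace hinf : {q : Pt × Fin k | q ∈ x.val ∧ q.1 ∈ A}.Infinite := hinf
  obtain ⟨R, hcR⟩ := hA.subset_closedBall (0 : Pt)
  set B : Set Pt := closedBall (0 : Pt) (R + (W + H)) with hB
  have hvolB : volume B < ⊤ := by
    rw [hB, ← closedBall_prod_same]
    rw [Measure.volume_eq_prod, Measure.prod_prod]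
    exact ENNReal.mul_lt_top (by rw [Real.volume_closedBall]; exact ENNReal.ofReal_lt_top)
      (by rw [Real.volume_closedBall]; exact ENNReal.ofReal_lt_top)
  have hδ0 : ENNReal.ofReal δ ≠ 0 := (ENNReal.ofReal_pos.2 hδ).ne'
  obtain ⟨n, hn⟩ := ENNReal.exists_nat_gt (ENNReal.div_lt_top hvolB.ne hδ0).ne
  obtain ⟨F, hFs, hcard⟩ := hinf.exists_subset_card_eq n
  have hle := card_mul_le hsz hδle x F (fun q hq => (hFs hq).1) B
    (fun q hq => htile_subset_ball hsz hW hH hW0 hH0 q (hcR (hFs hq).2))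
  rw [hcard] at hle
  have : volume B < (n : ℝ≥0∞) * ENNReal.ofReal δ :=
    (ENNReal.div_lt_iff (Or.inl hδ0) (Or.inl ENNReal.ofReal_ne_top)).1 hn
  exact absurd hle (not_le.2 this)

include hsz hW hH hδ hδle hW0 hH0 in
lemma finite_tiles_in' (x : Tilings sz) {A : Set Pt} (hA : IsBounded A) (j : Fin k) :
    {q : Pt × Fin k | q ∈ x.val ∧ q.1 ∈ A ∧ q.2 = j}.Finite :=
  (finite_tiles_in hsz hW hH hδ hδle hW0 hH0 x hA).subset fun q hq => ⟨hq.1, hq.2.1⟩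

end Bounds

section Frontier

def edgeK (sz : Fin k → ℝ × ℝ) (j : Fin k) : Set Pt :=
  Icc (0:ℝ) (sz j).1 ×ˢ ({0, (sz j).2} : Set ℝ) ∪ ({0, (sz j).1} : Set ℝ) ×ˢ Icc (0:ℝ) (sz j).2

variable (hsz : ∀ j, 0 < (sz j).1 ∧ 0 < (sz j).2)

lemma edgeK_compact (j : Fin k) : IsCompact (edgeK sz j) :=
  (isCompact_Icc.prod (((Set.finite_singleton _).insert _).isCompact)).union
    ((((Set.finite_singleton _).insert _).isCompact).prod isCompact_Icc)

include hsz in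
lemma edgeK_bounds {j : Fin k} {e : Pt} (he : e ∈ edgeK sz j) :
    0 ≤ e.1 ∧ e.1 ≤ (sz j).1 ∧ 0 ≤ e.2 ∧ e.2 ≤ (sz j).2 := by
  have h1 := (hsz j).1; have h2 := (hsz j).2
  rcases he with ⟨ha, hb⟩ | ⟨ha, hb⟩
  · rw [mem_Icc] at ha
    rcases hb with hb | hb <;> rw [hb] at * <;> refine ⟨ha.1, ha.2, by linarith, by linarith⟩
  · rw [mem_Icc] at hb
    rcases ha with ha | ha <;> rw [ha] at * <;> exact ⟨by linarith, by linarith, hb.1, hb.2⟩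

include hsz in
lemma mem_frontier_closedTile {q : Pt × Fin k} {z : Pt} :
    z ∈ frontier (closedTile sz q) ↔ z - q.1 ∈ edgeK sz q.2 := by
  have hw := (hsz q.2).1; have hh := (hsz q.2).2
  rw [closedTile, frontier_prod_eq, closure_Icc, closure_Icc,
    frontier_Icc (by linarith : q.1.1 ≤ q.1.1 + (sz q.2).1),
    frontier_Icc (by linarith : q.1.2 ≤ q.1.2 + (sz q.2).2)]
  simp only [edgeK, Set.mem_union, Set.mem_prod, mem_Icc, Set.mem_insert_iff,
    Set.mem_singleton_iff, Prod.fst_sub, Prod.snd_sub, sub_eq_zero]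
  constructor
  · rintro (⟨⟨h1, h2⟩, h3 | h3⟩ | ⟨h1 | h1, h2, h3⟩)
    · exact Or.inl ⟨⟨by linarith, by linarith⟩, Or.inl (by linarith)⟩
    · exact Or.inl ⟨⟨by linarith, by linarith⟩, Or.inr (by linarith)⟩
    · exact Or.inr ⟨Or.inl (by linarith), by linarith, by linarith⟩
    · exact Or.inr ⟨Or.inr (by linarith), by linarith, by linarith⟩
  · rintro (⟨⟨h1, h2⟩, h3 | h3⟩ | ⟨h1 | h1, h2, h3⟩)
    · exact Or.inl ⟨⟨by linarith, by linarith⟩, Or.inl (by linarith)⟩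
    · exact Or.inl ⟨⟨by linarith, by linarith⟩, Or.inr (by linarith)⟩
    · exact Or.inr ⟨Or.inl (by linarith), by linarith, by linarith⟩
    · exact Or.inr ⟨Or.inr (by linarith), by linarith, by linarith⟩

lemma mem_bdry {P : Set (Pt × Fin k)} {z : Pt} :
    z ∈ bdry sz P ↔ ∃ q ∈ P, z ∈ frontier (closedTile sz q) := by
  simp [bdry]

include hsz in
lemma mem_bdry' {P : Set (Pt × Fin k)} {z : Pt} :
    z ∈ bdry sz P ↔ ∃ q ∈ P, z - q.1 ∈ edgeK sz q.2 := by
  rw [mem_bdry]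
  exact exists_congr fun q => and_congr_right fun _ => mem_frontier_closedTile hsz

include hsz in
lemma mem_bdry_trSet {P : Set (Pt × Fin k)} {v z : Pt} :
    z ∈ bdry sz (trSet v P) ↔ z + v ∈ bdry sz P := by
  rw [mem_bdry' hsz, mem_bdry' hsz]
  constructor
  · rintro ⟨q', ⟨q, hq, rfl⟩, hf⟩
    refine ⟨q, hq, ?_⟩
    have : z + v - q.1 = z - (q.1 - v) := by abel
    rw [this]; exact hf
  · rintro ⟨q, hq, hf⟩
    refine ⟨(q.1 - v, q.2), ⟨q, hq, rfl⟩, ?_⟩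
    have : z - (q.1 - v) = z + v - q.1 := by abel
    rw [this]; exact hf

end Frontier

section Closed
variable (hsz : ∀ j, 0 < (sz j).1 ∧ 0 < (sz j).2)
variable {W H δ : ℝ} (hW : ∀ j, (sz j).1 ≤ W) (hH : ∀ j, (sz j).2 ≤ H)
variable (hδ : 0 < δ) (hδle : ∀ j, δ ≤ (sz j).1 * (sz j).2)
variable (hW0 : 0 ≤ W) (hH0 : 0 ≤ H)

include hsz hW hH in
lemma dist_le_of_frontier {q : Pt × Fin k} {z : Pt} (h : z ∈ frontier (closedTile sz q)) :
    dist z q.1 ≤ W + H := by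
  rw [mem_frontier_closedTile hsz] at h
  obtain ⟨h1, h2, h3, h4⟩ := edgeK_bounds hsz h
  have hw := (hsz q.2).1; have hh := (hsz q.2).2
  have hWj := hW q.2; have hHj := hH q.2
  rw [Prod.dist_eq]
  simp only [Prod.fst_sub, Prod.snd_sub] at h1 h2 h3 h4
  refine max_le ?_ ?_ <;> rw [Real.dist_eq, abs_le] <;> constructor <;> linarith

include hsz hW hH hδ hδle hW0 hH0 in
lemma isClosed_bdry (x : Tilings sz) : IsClosed (bdry sz x.val) := by
  rw [← isOpen_compl_iff, Metric.isOpen_iff]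
  intro z hz
  set T := {q : Pt × Fin k | q ∈ x.val ∧ q.1 ∈ closedBall z (1 + (W + H))} with hT
  have hTfin : T.Finite := finite_tiles_in hsz hW hH hδ hδle hW0 hH0 x (isBounded_closedBall)
  have hfc : IsClosed (⋃ q ∈ T, frontier (closedTile sz q)) :=
    hTfin.isClosed_biUnion fun q _ => isClosed_frontier
  have hzf : z ∈ (⋃ q ∈ T, frontier (closedTile sz q))ᶜ := by
    intro hmem
    simp only [Set.mem_iUnion, exists_prop] at hmem
    obtain ⟨q, hqT, hqf⟩ := hmem
    exact hz (mem_bdry.2 ⟨q, hqT.1, hqf⟩)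
  obtain ⟨ε1, hε1, hball⟩ := Metric.isOpen_iff.1 hfc.isOpen_compl z hzf
  refine ⟨min ε1 1, lt_min hε1 one_pos, ?_⟩
  intro w' hw' hwb
  obtain ⟨q, hqx, hqf⟩ := mem_bdry.1 hwb
  have hd1 : dist w' q.1 ≤ W + H := dist_le_of_frontier hsz hW hH hqf
  have hqT : q ∈ T := by
    refine ⟨hqx, ?_⟩
    rw [mem_closedBall]
    rw [mem_ball] at hw'
    calc dist q.1 z ≤ dist q.1 w' + dist w' z := dist_triangle _ _ _
      _ ≤ (W + H) + min ε1 1 := add_le_add (by rw [dist_comm]; exact hd1) hw'.le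
      _ ≤ 1 + (W + H) := by have := min_le_right ε1 1; linarith
  have : w' ∈ ⋃ q ∈ T, frontier (closedTile sz q) := by
    simp only [Set.mem_iUnion, exists_prop]; exact ⟨q, hqT, hqf⟩
  exact hball (mem_ball.2 (lt_of_lt_of_le (mem_ball.1 hw') (min_le_left _ _))) this

end Closed

section Meas
variable (sz)

lemma meas_cyl {U : Set Pt} (hU : IsOpen U) (j : Fin k) :
    MeasurableSet {x : Tilings sz | ∃ q ∈ x.val, q.1 ∈ U ∧ q.2 = j} :=
  MeasurableSpace.measurableSet_generateFrom ⟨U, j, hU, rfl⟩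

variable {sz}
variable (hsz : ∀ j, 0 < (sz j).1 ∧ 0 < (sz j).2)
variable {W H δ : ℝ} (hW : ∀ j, (sz j).1 ≤ W) (hH : ∀ j, (sz j).2 ≤ H)
variable (hδ : 0 < δ) (hδle : ∀ j, δ ≤ (sz j).1 * (sz j).2)
variable (hW0 : 0 ≤ W) (hH0 : 0 ≤ H)

include hsz hW hH hδ hδle hW0 hH0 in
lemma meas_compactCyl {F : Set Pt} (hF : IsCompact F) (j : Fin k) :
    MeasurableSet {x : Tilings sz | ∃ q ∈ x.val, q.1 ∈ F ∧ q.2 = j} := by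
  rcases F.eq_empty_or_nonempty with rfl | hFne
  · convert MeasurableSet.empty (α := Tilings sz)
    ext x; simp
  have key : {x : Tilings sz | ∃ q ∈ x.val, q.1 ∈ F ∧ q.2 = j}
      = ⋂ n : ℕ, {x | ∃ q ∈ x.val, q.1 ∈ Metric.thickening (1/(n+1)) F ∧ q.2 = j} := by
    apply Set.Subset.antisymm
    · rintro x ⟨q, hq, hqF, hqj⟩
      exact Set.mem_iInter.2 fun n =>
        ⟨q, hq, Metric.self_subset_thickening (by positivity) F hqF, hqj⟩
    · intro x hx
      have h0 : ∃ q ∈ x.val, q.1 ∈ Metric.thickening 1 F ∧ q.2 = j := by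
        have := Set.mem_iInter.1 hx 0
        simpa using this
      set T := {q : Pt × Fin k | q ∈ x.val ∧ q.1 ∈ Metric.thickening 1 F ∧ q.2 = j} with hTdef
      have hTfin : T.Finite :=
        (finite_tiles_in hsz hW hH hδ hδle hW0 hH0 x (hF.isBounded.thickening)).subset
          fun q hq => ⟨hq.1, hq.2.1⟩
      have hTne : T.Nonempty := by
        obtain ⟨q, hq1, hq2, hq3⟩ := h0; exact ⟨q, hq1, hq2, hq3⟩
      by_cases hgood : ∃ q ∈ T, q.1 ∈ F
      · obtain ⟨q, ⟨hqx, -, hqj⟩, hqF⟩ := hgood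
        exact ⟨q, hqx, hqF, hqj⟩
      · exfalso
        push_neg at hgood
        have hTne' : hTfin.toFinset.Nonempty := by
          rwa [Set.Finite.toFinset_nonempty]
        obtain ⟨q0, hq0, hmin⟩ := hTfin.toFinset.exists_min_image
          (fun q => Metric.infDist q.1 F) hTne'
        rw [Set.Finite.mem_toFinset] at hq0
        have hq0pos : 0 < Metric.infDist q0.1 F := by
          rcases (Metric.infDist_nonneg (x := q0.1) (s := F)).lt_or_eq with h | h
          · exact h
          · exact absurd ((hF.isClosed.mem_iff_infDist_zero hFne).2 h.symm) (hgood q0 hq0)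
        obtain ⟨n, hn⟩ := exists_nat_one_div_lt hq0pos
        have hxn := Set.mem_iInter.1 hx n
        obtain ⟨q, hqx, hqth, hqj⟩ := hxn
        have h1n : (1:ℝ)/(n+1) ≤ 1 := by
          rw [div_le_one (by positivity)]; linarith [Nat.cast_nonneg (α := ℝ) n]
        have hqT : q ∈ T := ⟨hqx, Metric.thickening_mono h1n F hqth, hqj⟩
        obtain ⟨zF, hzF, hdz⟩ := Metric.mem_thickening_iff.1 hqth
        have : Metric.infDist q.1 F < 1/(n+1) :=
          lt_of_le_of_lt (Metric.infDist_le_dist_of_mem hzF) hdz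
        have := hmin q (Set.Finite.mem_toFinset _ |>.2 hqT)
        linarith
  rw [key]
  exact MeasurableSet.iInter fun n => meas_cyl sz Metric.isOpen_thickening j

/-- Event: some point of the boundary is within `1/(n+1)` of `c`. -/
def NearSet (sz : Fin k → ℝ × ℝ) (c : Pt) (n : ℕ) : Set (Tilings sz) :=
  {x | ∃ z ∈ bdry sz x.val, dist z c ≤ 1/(n+1)}

include hsz hW hH hδ hδle hW0 hH0 in
lemma meas_NearSet (c : Pt) (n : ℕ) : MeasurableSet (NearSet sz c n) := by
  have key : NearSet sz c n = ⋃ j : Fin k,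
      {x : Tilings sz | ∃ q ∈ x.val,
        q.1 ∈ (fun w : Pt × Pt => w.1 - w.2) '' (closedBall c (1/(n+1)) ×ˢ edgeK sz j) ∧
        q.2 = j} := by
    ext x
    simp only [NearSet, Set.mem_setOf_eq, Set.mem_iUnion]
    constructor
    · rintro ⟨z, hz, hdz⟩
      obtain ⟨q, hq, he⟩ := (mem_bdry' hsz).1 hz
      refine ⟨q.2, q, hq, ⟨(z, z - q.1), ⟨mem_closedBall.2 hdz, he⟩, sub_sub_cancel z q.1⟩, rfl⟩
    · rintro ⟨j, q, hq, ⟨⟨b, e⟩, ⟨hb, he⟩, hbe⟩, hqj⟩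
      refine ⟨q.1 + e, (mem_bdry' hsz).2 ⟨q, hq, by rw [hqj]; simpa using he⟩, ?_⟩
      have : q.1 + e = b := by
        have : q.1 = b - e := hbe.symm
        rw [this]; abel
      rw [this]; exact mem_closedBall.1 hb
  rw [key]
  refine MeasurableSet.iUnion fun j => meas_compactCyl hsz hW hH hδ hδle hW0 hH0 ?_ j
  exact ((isCompact_closedBall c _).prod (edgeK_compact j)).image
    (continuous_fst.sub continuous_snd)

end Meas

section DSet

lemma rat_approx {p q a : ℝ} (hpq : p < q) (ha : a ∈ Icc p q) {ε : ℝ} (hε : 0 < ε) :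
    ∃ r : ℚ, (r:ℝ) ∈ Icc p q ∧ |a - (r:ℝ)| ≤ ε := by
  rw [mem_Icc] at ha
  have hlt : max p (a - ε/2) < min q (a + ε/2) := by
    rw [max_lt_iff, lt_min_iff, lt_min_iff]
    exact ⟨⟨hpq, by linarith⟩, ⟨by linarith, by linarith⟩⟩
  obtain ⟨r, h1, h2⟩ := exists_rat_btwn hlt
  have e1 := le_max_left p (a - ε/2)
  have e2 := le_max_right p (a - ε/2)
  have e3 := min_le_left q (a + ε/2)
  have e4 := min_le_right q (a + ε/2)
  exact ⟨r, mem_Icc.2 ⟨by linarith, by linarith⟩, abs_le.2 ⟨by linarith, by linarith⟩⟩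

variable (sz)

/-- Event: some vertical segment `{a} × [m, M]` with `a ∈ [p,q]` lies in the boundary. -/
def DSet (p q m M : ℝ) : Set (Tilings sz) :=
  {x | ∃ a ∈ Icc p q, ∀ y ∈ Icc m M, (a, y) ∈ bdry sz x.val}

/-- Event: some vertical ray `{a} × [m, ∞)` with `a ∈ [p,q]` lies in the boundary. -/
def UpSet (p q m : ℝ) : Set (Tilings sz) :=
  {x | ∃ a ∈ Icc p q, ∀ y : ℝ, m ≤ y → (a, y) ∈ bdry sz x.val}

/-- Event: some vertical ray `{a} × (-∞, m]` with `a ∈ [p,q]` lies in the boundary. -/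
def DnSet (p q m : ℝ) : Set (Tilings sz) :=
  {x | ∃ a ∈ Icc p q, ∀ y : ℝ, y ≤ m → (a, y) ∈ bdry sz x.val}

/-- Event: some vertical ray `{a} × [m, ∞)` or `{a} × (-∞, m]`, `a ∈ [p,q]`, in the boundary. -/
def BV (p q : ℝ) : Set (Tilings sz) :=
  {x | ∃ a ∈ Icc p q, ∃ m : ℝ,
    (∀ y : ℝ, m ≤ y → (a, y) ∈ bdry sz x.val) ∨ (∀ y : ℝ, y ≤ m → (a, y) ∈ bdry sz x.val)}

variable {sz}
variable (hsz : ∀ j, 0 < (sz j).1 ∧ 0 < (sz j).2)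
variable {W H δ : ℝ} (hW : ∀ j, (sz j).1 ≤ W) (hH : ∀ j, (sz j).2 ≤ H)
variable (hδ : 0 < δ) (hδle : ∀ j, δ ≤ (sz j).1 * (sz j).2)
variable (hW0 : 0 ≤ W) (hH0 : 0 ≤ H)

include hsz hW hH hδ hδle hW0 hH0 in
lemma DSet_eq {p q m M : ℝ} (hpq : p < q) (hmM : m < M) :
    DSet sz p q m M = ⋂ n : ℕ, ⋃ r : {r : ℚ // (r:ℝ) ∈ Icc p q},
      ⋂ s : {s : ℚ // (s:ℝ) ∈ Icc m M}, NearSet sz ((r:ℝ), (s:ℝ)) n := by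
  apply Set.Subset.antisymm
  · rintro x ⟨a, ha, hseg⟩
    refine Set.mem_iInter.2 fun n => ?_
    obtain ⟨r, hr, hra⟩ := rat_approx hpq ha (by positivity : (0:ℝ) < 1/(n+1))
    refine Set.mem_iUnion.2 ⟨⟨r, hr⟩, Set.mem_iInter.2 fun s => ?_⟩
    refine ⟨(a, (s:ℝ)), hseg _ s.2, ?_⟩
    rw [Prod.dist_eq]
    refine max_le ?_ ?_
    · rw [Real.dist_eq]; exact hra
    · simp [dist_self]; positivity
  · intro x hx
    have hch : ∀ n : ℕ, ∃ r : ℚ, (r:ℝ) ∈ Icc p q ∧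
        ∀ s : ℚ, (s:ℝ) ∈ Icc m M → x ∈ NearSet sz ((r:ℝ), (s:ℝ)) n := by
      intro n
      have := Set.mem_iInter.1 hx n
      obtain ⟨r, hr⟩ := Set.mem_iUnion.1 this
      exact ⟨r.1, r.2, fun s hs => Set.mem_iInter.1 hr ⟨s, hs⟩⟩
    choose u hu1 hu2 using hch
    obtain ⟨a, ha, φ, hφ, hconv⟩ :=
      isCompact_Icc.tendsto_subseq (x := fun n => ((u n : ℝ))) hu1
    refine ⟨a, ha, fun y hy => ?_⟩
    have hclosed := isClosed_bdry hsz hW hH hδ hδle hW0 hH0 x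
    rw [← hclosed.closure_eq]
    rw [Metric.mem_closure_iff]
    intro ε hε
    obtain ⟨s, hs, hsy⟩ := rat_approx hmM hy (by positivity : (0:ℝ) < ε/4)
    rw [Metric.tendsto_atTop] at hconv
    obtain ⟨N1, hN1⟩ := hconv (ε/4) (by positivity)
    obtain ⟨N2, hN2⟩ := exists_nat_one_div_lt (by positivity : (0:ℝ) < ε/4)
    set n := max N1 N2 with hn
    obtain ⟨z, hz, hdz⟩ := hu2 (φ n) s hs
    have hφn : (n:ℝ) ≤ (φ n : ℝ) := by exact_mod_cast hφ.le_apply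
    have h1 : (1:ℝ)/(φ n + 1) ≤ 1/(N2 + 1) := by
      apply div_le_div_of_nonneg_left (by norm_num) (by positivity)
      have : (N2:ℝ) ≤ n := by exact_mod_cast le_max_right N1 N2
      linarith
    have h2 : dist ((u (φ n) : ℝ)) a < ε/4 := hN1 n (le_max_left _ _)
    refine ⟨z, hz, ?_⟩
    calc dist (a, y) z ≤ dist (a, y) ((u (φ n) : ℝ), (s:ℝ)) + dist ((u (φ n) : ℝ), (s:ℝ)) z :=
          dist_triangle _ _ _
      _ < ε := by
          have hd1 : dist (a, y) ((u (φ n) : ℝ), (s:ℝ)) ≤ max (ε/4) (ε/4) := by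
            rw [Prod.dist_eq]
            refine max_le_max ?_ ?_
            · rw [Real.dist_eq]
              rw [Real.dist_eq, abs_sub_comm] at h2
              exact h2.le
            · rw [Real.dist_eq]; exact hsy
          have hd2 : dist ((u (φ n) : ℝ), (s:ℝ)) z < ε/4 + ε/4 := by
            rw [dist_comm]
            calc dist z ((u (φ n) : ℝ), (s:ℝ)) ≤ 1/(φ n + 1) := hdz
              _ ≤ 1/(N2+1) := h1
              _ < ε/4 := hN2
              _ < ε/4 + ε/4 := by linarith
          have : max (ε/4) (ε/4) = ε/4 := max_self _
          rw [this] at hd1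
          linarith
  -- done

include hsz hW hH hδ hδle hW0 hH0 in
lemma meas_DSet {p q m M : ℝ} (hpq : p < q) (hmM : m < M) :
    MeasurableSet (DSet sz p q m M) := by
  rw [DSet_eq hsz hW hH hδ hδle hW0 hH0 hpq hmM]
  exact MeasurableSet.iInter fun n => MeasurableSet.iUnion fun r =>
    MeasurableSet.iInter fun s => meas_NearSet hsz hW hH hδ hδle hW0 hH0 _ n

include hsz hW hH hδ hδle hW0 hH0 in
lemma UpSet_eq {p q m : ℝ} (hpq : p < q) :
    UpSet sz p q m = ⋂ n : ℕ, DSet sz p q m (m + n + 1) := by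
  apply Set.Subset.antisymm
  · rintro x ⟨a, ha, hseg⟩
    exact Set.mem_iInter.2 fun n => ⟨a, ha, fun y hy => hseg y hy.1⟩
  · intro x hx
    have hch : ∀ n : ℕ, ∃ a, a ∈ Icc p q ∧ ∀ y ∈ Icc m (m + n + 1), (a, y) ∈ bdry sz x.val :=
      fun n => Set.mem_iInter.1 hx n
    choose u hu1 hu2 using hch
    obtain ⟨a, ha, φ, hφ, hconv⟩ := isCompact_Icc.tendsto_subseq (x := u) hu1
    refine ⟨a, ha, fun y hy => ?_⟩
    have hclosed := isClosed_bdry hsz hW hH hδ hδle hW0 hH0 x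
    refine hclosed.mem_of_tendsto (Filter.Tendsto.prodMk_nhds hconv (tendsto_const_nhds (x := y))) ?_
    rw [Filter.eventually_atTop]
    refine ⟨⌈y - m⌉₊, fun j hj => ?_⟩
    refine hu2 (φ j) y ⟨hy, ?_⟩
    have h1 : y - m ≤ (⌈y - m⌉₊ : ℝ) := Nat.le_ceil _
    have h2 : (⌈y - m⌉₊ : ℝ) ≤ (j : ℝ) := by exact_mod_cast hj
    have h3 : (j : ℝ) ≤ (φ j : ℝ) := by exact_mod_cast hφ.le_apply
    linarith

include hsz hW hH hδ hδle hW0 hH0 in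
lemma DnSet_eq {p q m : ℝ} (hpq : p < q) :
    DnSet sz p q m = ⋂ n : ℕ, DSet sz p q (m - n - 1) m := by
  apply Set.Subset.antisymm
  · rintro x ⟨a, ha, hseg⟩
    exact Set.mem_iInter.2 fun n => ⟨a, ha, fun y hy => hseg y hy.2⟩
  · intro x hx
    have hch : ∀ n : ℕ, ∃ a, a ∈ Icc p q ∧ ∀ y ∈ Icc (m - n - 1) m, (a, y) ∈ bdry sz x.val :=
      fun n => Set.mem_iInter.1 hx n
    choose u hu1 hu2 using hch
    obtain ⟨a, ha, φ, hφ, hconv⟩ := isCompact_Icc.tendsto_subseq (x := u) hu1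
    refine ⟨a, ha, fun y hy => ?_⟩
    have hclosed := isClosed_bdry hsz hW hH hδ hδle hW0 hH0 x
    refine hclosed.mem_of_tendsto (Filter.Tendsto.prodMk_nhds hconv (tendsto_const_nhds (x := y))) ?_
    rw [Filter.eventually_atTop]
    refine ⟨⌈m - y⌉₊, fun j hj => ?_⟩
    refine hu2 (φ j) y ⟨?_, hy⟩
    have h1 : m - y ≤ (⌈m - y⌉₊ : ℝ) := Nat.le_ceil _
    have h2 : (⌈m - y⌉₊ : ℝ) ≤ (j : ℝ) := by exact_mod_cast hj
    have h3 : (j : ℝ) ≤ (φ j : ℝ) := by exact_mod_cast hφ.le_apply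
    linarith

lemma BV_eq (p q : ℝ) :
    BV sz p q = (⋃ m : ℤ, UpSet sz p q m) ∪ ⋃ m : ℤ, DnSet sz p q m := by
  apply Set.Subset.antisymm
  · rintro x ⟨a, ha, m, hm | hm⟩
    · refine Or.inl (Set.mem_iUnion.2 ⟨⌈m⌉, a, ha, fun y hy => hm y ?_⟩)
      exact le_trans (Int.le_ceil m) hy
    · refine Or.inr (Set.mem_iUnion.2 ⟨⌊m⌋, a, ha, fun y hy => hm y ?_⟩)
      exact le_trans hy (Int.floor_le m)
  · rintro x (hx | hx) <;> obtain ⟨m, a, ha, hm⟩ := Set.mem_iUnion.1 hx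
    · exact ⟨a, ha, m, Or.inl hm⟩
    · exact ⟨a, ha, m, Or.inr hm⟩

include hsz hW hH hδ hδle hW0 hH0 in
lemma meas_UpSet {p q m : ℝ} (hpq : p < q) : MeasurableSet (UpSet sz p q m) := by
  rw [UpSet_eq hsz hW hH hδ hδle hW0 hH0 hpq]
  exact MeasurableSet.iInter fun n =>
    meas_DSet hsz hW hH hδ hδle hW0 hH0 hpq (by push_cast; linarith [Nat.cast_nonneg (α := ℝ) n])

include hsz hW hH hδ hδle hW0 hH0 in
lemma meas_DnSet {p q m : ℝ} (hpq : p < q) : MeasurableSet (DnSet sz p q m) := by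
  rw [DnSet_eq hsz hW hH hδ hδle hW0 hH0 hpq]
  exact MeasurableSet.iInter fun n =>
    meas_DSet hsz hW hH hδ hδle hW0 hH0 hpq (by push_cast; linarith [Nat.cast_nonneg (α := ℝ) n])

include hsz hW hH hδ hδle hW0 hH0 in
lemma meas_BV {p q : ℝ} (hpq : p < q) : MeasurableSet (BV sz p q) := by
  rw [BV_eq]
  exact ((MeasurableSet.iUnion fun m => meas_UpSet hsz hW hH hδ hδle hW0 hH0 hpq)).union
    (MeasurableSet.iUnion fun m => meas_DnSet hsz hW hH hδ hδle hW0 hH0 hpq)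

include hsz in
lemma mem_bdry_S {x : Tilings sz} {v : Pt} {z : Pt} :
    z ∈ bdry sz (S sz v x).val ↔ z + v ∈ bdry sz x.val :=
  mem_bdry_trSet hsz

include hsz in
lemma BV_vert_inv (p q t : ℝ) : S sz (0, t) ⁻¹' BV sz p q = BV sz p q := by
  ext x
  simp only [Set.mem_preimage, BV, Set.mem_setOf_eq]
  constructor
  · rintro ⟨a, ha, m, hm | hm⟩
    · refine ⟨a, ha, m + t, Or.inl fun y hy => ?_⟩
      have := hm (y - t) (by linarith)
      rw [mem_bdry_S hsz] at this
      simpa using this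
    · refine ⟨a, ha, m + t, Or.inr fun y hy => ?_⟩
      have := hm (y - t) (by linarith)
      rw [mem_bdry_S hsz] at this
      simpa using this
  · rintro ⟨a, ha, m, hm | hm⟩
    · refine ⟨a, ha, m - t, Or.inl fun y hy => ?_⟩
      rw [mem_bdry_S hsz]
      have : (a, y) + (0, t) = (a, y + t) := by simp
      rw [this]
      exact hm (y + t) (by linarith)
    · refine ⟨a, ha, m - t, Or.inr fun y hy => ?_⟩
      rw [mem_bdry_S hsz]
      have : (a, y) + (0, t) = (a, y + t) := by simp
      rw [this]
      exact hm (y + t) (by linarith)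

include hsz in
lemma BV_horiz_tr (p q c : ℝ) : S sz (c, 0) ⁻¹' BV sz p q = BV sz (p + c) (q + c) := by
  ext x
  simp only [Set.mem_preimage, BV, Set.mem_setOf_eq]
  constructor
  · rintro ⟨a, ha, m, hm | hm⟩
    · refine ⟨a + c, ?_, m, Or.inl fun y hy => ?_⟩
      · rw [mem_Icc] at ha ⊢; constructor <;> linarith [ha.1, ha.2]
      · have := hm y hy
        rw [mem_bdry_S hsz] at this
        simpa using this
    · refine ⟨a + c, ?_, m, Or.inr fun y hy => ?_⟩
      · rw [mem_Icc] at ha ⊢; constructor <;> linarith [ha.1, ha.2]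
      · have := hm y hy
        rw [mem_bdry_S hsz] at this
        simpa using this
  · rintro ⟨a, ha, m, hm | hm⟩
    · refine ⟨a - c, ?_, m, Or.inl fun y hy => ?_⟩
      · rw [mem_Icc] at ha ⊢; constructor <;> linarith [ha.1, ha.2]
      · rw [mem_bdry_S hsz]
        have : (a - c, y) + (c, 0) = (a, y) := by simp
        rw [this]
        exact hm y hy
    · refine ⟨a - c, ?_, m, Or.inr fun y hy => ?_⟩
      · rw [mem_Icc] at ha ⊢; constructor <;> linarith [ha.1, ha.2]
      · rw [mem_bdry_S hsz]
        have : (a - c, y) + (c, 0) = (a, y) := by simp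
        rw [this]
        exact hm y hy

end DSet

section Strip

variable (sz)

def colUp (P : Set (Pt × Fin k)) : Set ℝ := {a | ∃ m : ℝ, ∀ y, m ≤ y → (a, y) ∈ bdry sz P}
def colDn (P : Set (Pt × Fin k)) : Set ℝ := {a | ∃ m : ℝ, ∀ y, y ≤ m → (a, y) ∈ bdry sz P}

variable {sz}
variable (hsz : ∀ j, 0 < (sz j).1 ∧ 0 < (sz j).2)
variable {W H δ : ℝ} (hW : ∀ j, (sz j).1 ≤ W) (hH : ∀ j, (sz j).2 ≤ H)
variable (hδ : 0 < δ) (hδle : ∀ j, δ ≤ (sz j).1 * (sz j).2)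
variable (hW0 : 0 ≤ W) (hH0 : 0 ≤ H)
variable {n₀ : ℕ}
variable (hn₀ : ENNReal.ofReal ((2 + 2*W) * (1 + 2*H)) < (n₀ : ℝ≥0∞) * ENNReal.ofReal δ)

include hsz hW hH hδ hδle hW0 hH0 hn₀ in
lemma strip_card (x : Tilings sz) (p M : ℝ) (F : Finset ℝ)
    (hF : ∀ a ∈ F, a ∈ Icc p (p+2) ∧ ∀ y ∈ Icc M (M+1), (a, y) ∈ bdry sz x.val) :
    F.card ≤ 2 * n₀ := by
  classical
  set T := {q : Pt × Fin k | q ∈ x.val ∧ q.1 ∈ Icc (p - W) (p + 2) ×ˢ Icc (M - H) (M + 1)}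
    with hTdef
  have hTfin : T.Finite := finite_tiles_in hsz hW hH hδ hδle hW0 hH0 x
    ((isBounded_Icc _ _).prod (isBounded_Icc _ _))
  set Tf := hTfin.toFinset with hTf
  have hTcard : Tf.card ≤ n₀ := by
    by_contra hlt
    push_neg at hlt
    have hle := card_mul_le hsz hδle x Tf
      (fun q hq => ((Set.Finite.mem_toFinset _).1 hq).1)
      (Icc (p - W) (p + 2 + W) ×ˢ Icc (M - H) (M + 1 + H)) ?_
    · have hvol : volume (Icc (p - W) (p + 2 + W) ×ˢ Icc (M - H) (M + 1 + H))
          = ENNReal.ofReal ((2 + 2*W) * (1 + 2*H)) := by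
        rw [Measure.volume_eq_prod, Measure.prod_prod, Real.volume_Icc, Real.volume_Icc,
          ← ENNReal.ofReal_mul (by linarith)]
        ring_nf
      rw [hvol] at hle
      have h2 : (n₀ : ℝ≥0∞) * ENNReal.ofReal δ ≤ (Tf.card : ℝ≥0∞) * ENNReal.ofReal δ :=
        mul_le_mul_left (by exact_mod_cast hlt.le) _
      exact absurd (lt_of_le_of_lt (h2.trans hle) hn₀) (lt_irrefl _)
    · intro q hq z hz
      have hq' := ((Set.Finite.mem_toFinset _).1 hq).2
      rw [Set.mem_prod, mem_Icc, mem_Icc] at hq'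
      rw [htile, Set.mem_prod, mem_Ico, mem_Ico] at hz
      have hWj := hW q.2; have hHj := hH q.2
      rw [Set.mem_prod, mem_Icc, mem_Icc]
      constructor <;> constructor <;> linarith [hq'.1.1, hq'.1.2, hq'.2.1, hq'.2.2,
        hz.1.1, hz.1.2, hz.2.1, hz.2.2]
  set Ys : Finset ℝ := Tf.image (fun q => q.1.2) ∪ Tf.image (fun q => q.1.2 + (sz q.2).2)
    with hYs
  obtain ⟨y₀, hy₀⟩ := ((Set.Ioo_infinite (by linarith : M < M + 1)).diff
    Ys.finite_toSet).nonempty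
  have hy₀I : y₀ ∈ Ioo M (M+1) := hy₀.1
  have hy₀Y : y₀ ∉ (Ys : Set ℝ) := hy₀.2
  set Xs : Finset ℝ := Tf.image (fun q => q.1.1) ∪ Tf.image (fun q => q.1.1 + (sz q.2).1)
    with hXs
  have hFX : F ⊆ Xs := by
    intro a haF
    obtain ⟨haI, hseg⟩ := hF a haF
    rw [mem_Icc] at haI
    have hmem : (a, y₀) ∈ bdry sz x.val := hseg y₀ ⟨hy₀I.1.le, hy₀I.2.le⟩
    obtain ⟨q, hqx, he⟩ := (mem_bdry' hsz).1 hmem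
    obtain ⟨hb1, hb2, hb3, hb4⟩ := edgeK_bounds hsz he
    simp only [Prod.fst_sub, Prod.snd_sub] at hb1 hb2 hb3 hb4
    have hWj := hW q.2; have hHj := hH q.2
    have hqT : q ∈ Tf := by
      rw [Set.Finite.mem_toFinset]
      refine ⟨hqx, ?_⟩
      rw [Set.mem_prod, mem_Icc, mem_Icc]
      exact ⟨⟨by linarith, by linarith⟩, ⟨by linarith [hy₀I.1, hy₀I.2],
        by linarith [hy₀I.1, hy₀I.2]⟩⟩
    rcases he with ⟨-, hy⟩ | ⟨hx1, -⟩
    · exfalso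
      apply hy₀Y
      simp only [Prod.snd_sub] at hy
      rcases hy with hy | hy
      · have : y₀ = q.1.2 := by
          have : y₀ - q.1.2 = 0 := hy
          linarith
        rw [hYs]
        simp only [Finset.coe_union, Set.mem_union, Finset.coe_image, Set.mem_image]
        exact Or.inl ⟨q, Finset.mem_coe.2 hqT, this.symm⟩
      · have : y₀ = q.1.2 + (sz q.2).2 := by
          have h' : y₀ - q.1.2 = (sz q.2).2 := hy
          linarith
        rw [hYs]
        simp only [Finset.coe_union, Set.mem_union, Finset.coe_image, Set.mem_image]
        exact Or.inr ⟨q, Finset.mem_coe.2 hqT, this.symm⟩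
    · simp only [Prod.fst_sub, Set.mem_insert_iff, Set.mem_singleton_iff] at hx1
      rw [hXs, Finset.mem_union]
      rcases hx1 with hx1 | hx1
      · exact Or.inl (Finset.mem_image.2 ⟨q, hqT, by linarith⟩)
      · exact Or.inr (Finset.mem_image.2 ⟨q, hqT, by linarith⟩)
  calc F.card ≤ Xs.card := Finset.card_le_card hFX
    _ ≤ Tf.card + Tf.card := le_trans (Finset.card_union_le _ _)
        (add_le_add (Finset.card_image_le) (Finset.card_image_le))
    _ ≤ 2 * n₀ := by omega

include hsz hW hH hδ hδle hW0 hH0 hn₀ in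
lemma colUp_card (x : Tilings sz) (p : ℝ) (F : Finset ℝ)
    (hF : ∀ a ∈ F, a ∈ Icc p (p+2) ∧ a ∈ colUp sz x.val) :
    F.card ≤ 2 * n₀ := by
  classical
  rcases F.eq_empty_or_nonempty with rfl | hFne
  · simp
  set f : ℝ → ℝ := fun a => if h : a ∈ colUp sz x.val then h.choose else 0 with hf
  have hfspec : ∀ a ∈ F, ∀ y, f a ≤ y → (a, y) ∈ bdry sz x.val := by
    intro a ha y hy
    have hc := (hF a ha).2
    simp only [hf, dif_pos hc] at hy
    exact hc.choose_spec y hy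
  obtain ⟨b, hbF, hb⟩ := F.exists_max_image f hFne
  refine strip_card hsz hW hH hδ hδle hW0 hH0 hn₀ x p (f b) F fun a ha => ?_
  exact ⟨(hF a ha).1, fun y hy => hfspec a ha y (le_trans (hb a ha) hy.1)⟩

include hsz hW hH hδ hδle hW0 hH0 hn₀ in
lemma colDn_card (x : Tilings sz) (p : ℝ) (F : Finset ℝ)
    (hF : ∀ a ∈ F, a ∈ Icc p (p+2) ∧ a ∈ colDn sz x.val) :
    F.card ≤ 2 * n₀ := by
  classical
  rcases F.eq_empty_or_nonempty with rfl | hFne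
  · simp
  set f : ℝ → ℝ := fun a => if h : a ∈ colDn sz x.val then h.choose else 0 with hf
  have hfspec : ∀ a ∈ F, ∀ y, y ≤ f a → (a, y) ∈ bdry sz x.val := by
    intro a ha y hy
    have hc := (hF a ha).2
    simp only [hf, dif_pos hc] at hy
    exact hc.choose_spec y hy
  obtain ⟨b, hbF, hb⟩ := F.exists_min_image f hFne
  refine strip_card hsz hW hH hδ hδle hW0 hH0 hn₀ x p (f b - 1) F fun a ha => ?_
  refine ⟨(hF a ha).1, fun y hy => hfspec a ha y ?_⟩
  have := hb a ha
  have h2 := hy.2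
  linarith

include hsz hW hH hδ hδle hW0 hH0 hn₀ in
lemma col_card (x : Tilings sz) (p : ℝ) (F : Finset ℝ)
    (hF : ∀ a ∈ F, a ∈ Icc p (p+2) ∧ (a ∈ colUp sz x.val ∨ a ∈ colDn sz x.val)) :
    F.card ≤ 4 * n₀ := by
  classical
  set F1 := F.filter (fun a => a ∈ colUp sz x.val) with hF1
  set F2 := F.filter (fun a => a ∉ colUp sz x.val) with hF2
  have hsplit : F = F1 ∪ F2 := (Finset.filter_union_filter_not_eq _ F).symm
  have h1 : F1.card ≤ 2 * n₀ :=
    colUp_card hsz hW hH hδ hδle hW0 hH0 hn₀ x p F1 fun a ha => by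
      have := Finset.mem_filter.1 ha
      exact ⟨(hF a this.1).1, this.2⟩
  have h2 : F2.card ≤ 2 * n₀ :=
    colDn_card hsz hW hH hδ hδle hW0 hH0 hn₀ x p F2 fun a ha => by
      have := Finset.mem_filter.1 ha
      refine ⟨(hF a this.1).1, ?_⟩
      rcases (hF a this.1).2 with h | h
      · exact absurd h this.2
      · exact h
  calc F.card = (F1 ∪ F2).card := by rw [← hsplit]
    _ ≤ F1.card + F2.card := Finset.card_union_le _ _
    _ ≤ 4 * n₀ := by omega

end Strip

section Ergodic

variable (hsz : ∀ j, 0 < (sz j).1 ∧ 0 < (sz j).2)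
variable {W H δ : ℝ} (hW : ∀ j, (sz j).1 ≤ W) (hH : ∀ j, (sz j).2 ≤ H)
variable (hδ : 0 < δ) (hδle : ∀ j, δ ≤ (sz j).1 * (sz j).2)
variable (hW0 : 0 ≤ W) (hH0 : 0 ≤ H)
variable {n₀ : ℕ}
variable (hn₀ : ENNReal.ofReal ((2 + 2*W) * (1 + 2*H)) < (n₀ : ℝ≥0∞) * ENNReal.ofReal δ)
variable (μ : Measure (Tilings sz)) [IsProbabilityMeasure μ]
variable (hinv : ∀ v : Pt, MeasurePreserving (S sz v) μ μ)
variable (hergV : ∀ E : Set (Tilings sz), MeasurableSet E →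
      (∀ t : ℝ, S sz (0, t) ⁻¹' E = E) → μ E = 0 ∨ μ E = 1)

include hsz hW hH hδ hδle hW0 hH0 hn₀ hinv hergV in
lemma NV_null : μ {x : Tilings sz | ∃ a : ℝ, a ∈ colUp sz x.val ∨ a ∈ colDn sz x.val} = 0 := by
  classical
  have hmeasBV : ∀ p q : ℝ, p < q → MeasurableSet (BV sz p q) := fun p q h =>
    meas_BV hsz hW hH hδ hδle hW0 hH0 h
  have htr : ∀ p q c : ℝ, p < q → μ (BV sz (p + c) (q + c)) = μ (BV sz p q) := by
    intro p q c h
    rw [← BV_horiz_tr hsz p q c]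
    exact (hinv (c, 0)).measure_preimage (hmeasBV p q h).nullMeasurableSet
  have herg : ∀ p q : ℝ, p < q → μ (BV sz p q) = 0 ∨ μ (BV sz p q) = 1 := fun p q h =>
    hergV _ (hmeasBV p q h) (fun t => BV_vert_inv hsz p q t)
  have hBVmem : ∀ (x : Tilings sz) (p q : ℝ), x ∈ BV sz p q ↔
      ∃ a ∈ Icc p q, a ∈ colUp sz x.val ∨ a ∈ colDn sz x.val := by
    intro x p q
    constructor
    · rintro ⟨a, ha, m, hm | hm⟩
      · exact ⟨a, ha, Or.inl ⟨m, hm⟩⟩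
      · exact ⟨a, ha, Or.inr ⟨m, hm⟩⟩
    · rintro ⟨a, ha, ⟨m, hm⟩ | ⟨m, hm⟩⟩
      · exact ⟨a, ha, m, Or.inl hm⟩
      · exact ⟨a, ha, m, Or.inr hm⟩
  by_cases hall : ∀ n : ℕ, μ (BV sz 0 (1/(n+1))) = 1
  · exfalso
    set nn : ℕ := 4 * n₀ + 1 with hnn
    have hlen : (0:ℝ) < 1/(nn+1) := by positivity
    have hone : ∀ i : ℕ, μ (BV sz (0 + 2*i/(nn+1)) (1/(nn+1) + 2*i/(nn+1))) = 1 := by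
      intro i
      rw [htr 0 (1/(nn+1)) (2*i/(nn+1)) hlen]
      exact hall nn
    set G := ⋂ i : ℕ, BV sz (0 + 2*i/(nn+1)) (1/(nn+1) + 2*i/(nn+1)) with hG
    have hmeasG : ∀ i : ℕ, MeasurableSet (BV sz (0 + 2*(i:ℝ)/(nn+1)) (1/(nn+1) + 2*i/(nn+1))) :=
      fun i => hmeasBV _ _ (by linarith)
    have hGone : μ G = 1 := by
      rw [hG]
      have hcompl : μ (⋃ i : ℕ, (BV sz (0 + 2*(i:ℝ)/(nn+1)) (1/(nn+1) + 2*i/(nn+1)))ᶜ) = 0 :=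
        measure_iUnion_null fun i => (prob_compl_eq_zero_iff (hmeasG i)).2 (hone i)
      have := (prob_compl_eq_zero_iff (μ := μ)
        (MeasurableSet.iInter fun i => hmeasG i)).1 ?_
      · exact this
      · rw [Set.compl_iInter]
        exact hcompl
    have hGne : G.Nonempty := by
      rcases Set.eq_empty_or_nonempty G with h | h
      · rw [h] at hGone; simp at hGone
      · exact h
    obtain ⟨x, hx⟩ := hGne
    have hxi : ∀ i : ℕ, ∃ a ∈ Icc (0 + 2*(i:ℝ)/(nn+1)) (1/(nn+1) + 2*i/(nn+1)),
        a ∈ colUp sz x.val ∨ a ∈ colDn sz x.val := by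
      intro i
      exact (hBVmem x _ _).1 (Set.mem_iInter.1 hx i)
    choose f hf1 hf2 using hxi
    have hmono : ∀ i j : ℕ, i < j → f i < f j := by
      intro i j hij
      have h1 := (mem_Icc.1 (hf1 i)).2
      have h2 := (mem_Icc.1 (hf1 j)).1
      have hpos : (0:ℝ) < nn + 1 := by positivity
      have : (1:ℝ)/(nn+1) + 2*i/(nn+1) < 0 + 2*j/(nn+1) := by
        rw [← add_div, zero_add, div_lt_div_iff₀ hpos hpos]
        have : (i:ℝ) + 1 ≤ (j:ℝ) := by exact_mod_cast hij
        nlinarith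
      linarith
    set F : Finset ℝ := (Finset.range (nn+1)).image f with hF
    have hcard : F.card = nn + 1 := by
      rw [hF, Finset.card_image_of_injOn, Finset.card_range]
      intro i hi j hj hij
      rcases lt_trichotomy i j with h | h | h
      · exact absurd (hmono i j h) (by rw [hij]; exact lt_irrefl _)
      · exact h
      · exact absurd (hmono j i h) (by rw [hij]; exact lt_irrefl _)
    have hle : F.card ≤ 4 * n₀ := by
      refine col_card hsz hW hH hδ hδle hW0 hH0 hn₀ x 0 F fun a ha => ?_
      rw [hF] at ha
      obtain ⟨i, hi, rfl⟩ := Finset.mem_image.1 ha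
      rw [Finset.mem_range] at hi
      constructor
      · have h1 := (mem_Icc.1 (hf1 i)).1
        have h2 := (mem_Icc.1 (hf1 i)).2
        rw [mem_Icc]
        have hpos : (0:ℝ) < nn + 1 := by positivity
        constructor
        · have : (0:ℝ) ≤ 2*i/(nn+1) := by positivity
          linarith
        · have : (1:ℝ)/(nn+1) + 2*i/(nn+1) ≤ 0 + 2 := by
            rw [← add_div, zero_add, div_le_iff₀ hpos]
            have : (i:ℝ) ≤ nn := by exact_mod_cast Nat.lt_succ_iff.1 hi
            nlinarith
          linarith
      · exact hf2 i
    omega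
  · push_neg at hall
    obtain ⟨n, hn⟩ := hall
    have hlen : (0:ℝ) < 1/(n+1) := by positivity
    have hzero : μ (BV sz 0 (1/(n+1))) = 0 := (herg 0 _ hlen).resolve_right hn
    have hz : ∀ i : ℤ, μ (BV sz (0 + i/(n+1)) (1/(n+1) + i/(n+1))) = 0 := by
      intro i
      rw [htr 0 (1/(n+1)) (i/(n+1)) hlen]
      exact hzero
    have hsub : {x : Tilings sz | ∃ a : ℝ, a ∈ colUp sz x.val ∨ a ∈ colDn sz x.val}
        ⊆ ⋃ i : ℤ, BV sz (0 + i/(n+1)) (1/(n+1) + i/(n+1)) := by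
      rintro x ⟨a, ha⟩
      have hpos : (0:ℝ) < n + 1 := by positivity
      set i : ℤ := ⌊a * (n+1)⌋ with hi
      refine Set.mem_iUnion.2 ⟨i, (hBVmem x _ _).2 ⟨a, ?_, ha⟩⟩
      rw [mem_Icc]
      have h1 : (i:ℝ) ≤ a * (n+1) := Int.floor_le _
      have h2 : a * (n+1) < i + 1 := Int.lt_floor_add_one _
      constructor
      · rw [zero_add, div_le_iff₀ hpos]
        linarith
      · rw [← add_div, le_div_iff₀ hpos]
        nlinarith
    exact measure_mono_null hsub (measure_iUnion_null hz)

end Ergodic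

section Swap

def ΦP : Set (Pt × Fin k) → Set (Pt × Fin k) := fun P =>
  (fun q : Pt × Fin k => (q.1.swap, q.2)) '' P

lemma mem_ΦP {P : Set (Pt × Fin k)} {q : Pt × Fin k} :
    q ∈ ΦP P ↔ (q.1.swap, q.2) ∈ P := by
  constructor
  · rintro ⟨r, hr, rfl⟩
    simpa using hr
  · intro h
    exact ⟨(q.1.swap, q.2), h, by simp⟩

lemma mem_trSet {P : Set (Pt × Fin k)} {u : Pt} {q : Pt × Fin k} :
    q ∈ trSet u P ↔ (q.1 + u, q.2) ∈ P := by
  constructor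
  · rintro ⟨r, hr, rfl⟩
    simpa using hr
  · intro h
    exact ⟨(q.1 + u, q.2), h, by simp⟩

lemma swap_sub (x y : Pt) : (x - y).swap = x.swap - y.swap := rfl

lemma mem_rect_swap {w h : ℝ} {z : Pt} : z ∈ rect w h ↔ z.swap ∈ rect h w := by
  simp only [rect, Set.mem_prod, Prod.fst_swap, Prod.snd_swap]
  tauto

variable {sz' : Fin k → ℝ × ℝ}

lemma isTiling_swap (hss : ∀ j, (sz' j).1 = (sz j).2 ∧ (sz' j).2 = (sz j).1)
    {P : Set (Pt × Fin k)} (h : IsTiling sz P) : IsTiling sz' (ΦP P) := by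
  intro x
  obtain ⟨q, ⟨hq, hrect⟩, hu⟩ := h x.swap
  refine ⟨(q.1.swap, q.2), ⟨mem_ΦP.2 (by simpa using hq), ?_⟩, ?_⟩
  · show x - q.1.swap ∈ rect (sz' q.2).1 (sz' q.2).2
    rw [(hss q.2).1, (hss q.2).2, mem_rect_swap, swap_sub, Prod.swap_swap]
    exact hrect
  · rintro r ⟨hr, hrect'⟩
    have hrP := mem_ΦP.1 hr
    have hr' : (r.1.swap, r.2) = q := by
      refine hu (r.1.swap, r.2) ⟨hrP, ?_⟩
      show x.swap - r.1.swap ∈ rect (sz r.2).1 (sz r.2).2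
      rw [← swap_sub, ← mem_rect_swap (w := (sz r.2).2) (h := (sz r.2).1)]
      rw [← (hss r.2).1, ← (hss r.2).2]
      exact hrect'
    have h1 : r.1 = q.1.swap := by
      have := congrArg (fun p : Pt × Fin k => p.1.swap) hr'
      simpa using this
    have h2 : r.2 = q.2 := by rw [← hr']
    rw [Prod.ext_iff]
    exact ⟨h1, h2⟩

def Φm (hss : ∀ j, (sz' j).1 = (sz j).2 ∧ (sz' j).2 = (sz j).1) :
    Tilings sz → Tilings sz' := fun x => ⟨ΦP x.val, isTiling_swap hss x.2⟩

lemma measurable_Φm (hss : ∀ j, (sz' j).1 = (sz j).2 ∧ (sz' j).2 = (sz j).1) :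
    Measurable (Φm hss) := by
  apply measurable_generateFrom
  rintro t ⟨U, j, hU, rfl⟩
  have : Φm hss ⁻¹' {P' : Tilings sz' | ∃ q ∈ P'.val, q.1 ∈ U ∧ q.2 = j}
      = {x : Tilings sz | ∃ q ∈ x.val, q.1 ∈ Prod.swap ⁻¹' U ∧ q.2 = j} := by
    ext x
    simp only [Set.mem_preimage, Set.mem_setOf_eq, Φm]
    constructor
    · rintro ⟨q', hq', hqU, hqj⟩
      exact ⟨(q'.1.swap, q'.2), mem_ΦP.1 hq', by simpa using hqU, hqj⟩
    · rintro ⟨q, hq, hqU, hqj⟩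
      exact ⟨(q.1.swap, q.2), mem_ΦP.2 (by simpa using hq), hqU, hqj⟩
  rw [this]
  exact meas_cyl sz (hU.preimage continuous_swap) j

lemma ΦP_trSet (v : Pt) (P : Set (Pt × Fin k)) :
    ΦP (trSet v P) = trSet v.swap (ΦP P) := by
  ext q
  rw [mem_ΦP, mem_trSet, mem_trSet, mem_ΦP]
  have : (q.1 + v.swap).swap = q.1.swap + v := by
    rw [Prod.swap_add, Prod.swap_swap]
  rw [this]

lemma ΦP_ΦP (P : Set (Pt × Fin k)) : ΦP (ΦP P) = P := by
  ext q
  rw [mem_ΦP, mem_ΦP]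
  simp

lemma Φm_S (hss : ∀ j, (sz' j).1 = (sz j).2 ∧ (sz' j).2 = (sz j).1) (v : Pt) (x : Tilings sz) :
    Φm hss (S sz v x) = S sz' v.swap (Φm hss x) :=
  Subtype.ext (ΦP_trSet v x.val)

lemma mem_edgeK_swap (hss : ∀ j, (sz' j).1 = (sz j).2 ∧ (sz' j).2 = (sz j).1)
    {j : Fin k} {e : Pt} : e ∈ edgeK sz' j ↔ e.swap ∈ edgeK sz j := by
  simp only [edgeK, (hss j).1, (hss j).2, Set.mem_union, Set.mem_prod,
    Prod.fst_swap, Prod.snd_swap]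
  tauto

lemma mem_bdry_swap (hss : ∀ j, (sz' j).1 = (sz j).2 ∧ (sz' j).2 = (sz j).1)
    (hsz : ∀ j, 0 < (sz j).1 ∧ 0 < (sz j).2)
    {P : Set (Pt × Fin k)} {z : Pt} : z ∈ bdry sz' (ΦP P) ↔ z.swap ∈ bdry sz P := by
  have hsz' : ∀ j, 0 < (sz' j).1 ∧ 0 < (sz' j).2 := fun j => by
    rw [(hss j).1, (hss j).2]; exact ⟨(hsz j).2, (hsz j).1⟩
  rw [mem_bdry' hsz', mem_bdry' hsz]
  constructor
  · rintro ⟨q', hq', he⟩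
    refine ⟨(q'.1.swap, q'.2), mem_ΦP.1 hq', ?_⟩
    show z.swap - q'.1.swap ∈ edgeK sz q'.2
    rw [← swap_sub]
    exact (mem_edgeK_swap hss).1 he
  · rintro ⟨q, hq, he⟩
    refine ⟨(q.1.swap, q.2), mem_ΦP.2 (by simpa using hq), ?_⟩
    show z - q.1.swap ∈ edgeK sz' q.2
    rw [mem_edgeK_swap hss, swap_sub, Prod.swap_swap]
    exact he

end Swap

section NVset

lemma NVset_eq :
    {x : Tilings sz | ∃ a : ℝ, a ∈ colUp sz x.val ∨ a ∈ colDn sz x.val}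
      = ⋃ i : ℤ, BV sz (i : ℝ) (i + 1) := by
  ext x
  simp only [Set.mem_setOf_eq, Set.mem_iUnion]
  constructor
  · rintro ⟨a, ha⟩
    refine ⟨⌊a⌋, a, mem_Icc.2 ⟨Int.floor_le a, (Int.lt_floor_add_one a).le⟩, ?_⟩
    rcases ha with ⟨m, hm⟩ | ⟨m, hm⟩
    · exact ⟨m, Or.inl hm⟩
    · exact ⟨m, Or.inr hm⟩
  · rintro ⟨i, a, haI, m, hm | hm⟩
    · exact ⟨a, Or.inl ⟨m, hm⟩⟩
    · exact ⟨a, Or.inr ⟨m, hm⟩⟩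

end NVset
end TP

open TP
open scoped ENNReal

/-- if a translation-invariant probability measure `μ` on the space of
tilings of `ℝ²` by a finite list of half-open rectangular tiles is ergodic for the
horizontal flow and ergodic for the vertical flow, then the set of tilings containing
an infinite (semi-infinite or bi-infinite) shear is `μ`-null. -/
theorem infinite_shears_null_of_directionally_ergodic {k : ℕ} (sz : Fin k → ℝ × ℝ)
    (hsz : ∀ j, 0 < (sz j).1 ∧ 0 < (sz j).2)
    (μ : Measure (Tilings sz)) [IsProbabilityMeasure μ]
    (hinv : ∀ v : Pt, MeasurePreserving (S sz v) μ μ)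
    (hergH : ∀ E : Set (Tilings sz), MeasurableSet E →
      (∀ t : ℝ, S sz (t, 0) ⁻¹' E = E) → μ E = 0 ∨ μ E = 1)
    (hergV : ∀ E : Set (Tilings sz), MeasurableSet E →
      (∀ t : ℝ, S sz (0, t) ⁻¹' E = E) → μ E = 0 ∨ μ E = 1) :
    ∃ N : Set (Tilings sz), MeasurableSet N ∧ μ N = 0 ∧
      {x : Tilings sz | ∃ ℓ : Set Pt, IsShear sz x.val ℓ ∧
        (SemiInfinite ℓ ∨ BiInfinite ℓ)} ⊆ N := by
  classical
  rcases Nat.eq_zero_or_pos k with hk | hk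
  · subst hk
    refine ⟨∅, MeasurableSet.empty, measure_empty, ?_⟩
    rintro x -
    obtain ⟨q, -, -⟩ := x.2 (0, 0)
    exact q.2.elim0
  have hne : Nonempty (Fin k) := ⟨⟨0, hk⟩⟩
  set W : ℝ := ∑ j, (sz j).1 with hWdef
  set H : ℝ := ∑ j, (sz j).2 with hHdef
  have hW : ∀ j, (sz j).1 ≤ W := fun j =>
    Finset.single_le_sum (fun i _ => (hsz i).1.le) (Finset.mem_univ j)
  have hH : ∀ j, (sz j).2 ≤ H := fun j =>
    Finset.single_le_sum (fun i _ => (hsz i).2.le) (Finset.mem_univ j)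
  have hW0 : 0 ≤ W := Finset.sum_nonneg fun i _ => (hsz i).1.le
  have hH0 : 0 ≤ H := Finset.sum_nonneg fun i _ => (hsz i).2.le
  set δ : ℝ := Finset.univ.inf' Finset.univ_nonempty (fun j => (sz j).1 * (sz j).2) with hδdef
  obtain ⟨j₀, -, hj₀⟩ := Finset.exists_mem_eq_inf' (Finset.univ_nonempty)
    (fun j => (sz j).1 * (sz j).2)
  have hδpos : 0 < δ := by
    rw [hδdef, hj₀]; exact mul_pos (hsz j₀).1 (hsz j₀).2
  have hδle : ∀ j, δ ≤ (sz j).1 * (sz j).2 := fun j => Finset.inf'_le _ (Finset.mem_univ j)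
  have harch : ∀ C : ℝ, 0 < C → ∃ n : ℕ, ENNReal.ofReal C < (n : ℝ≥0∞) * ENNReal.ofReal δ := by
    intro C hC
    obtain ⟨n, hn⟩ := exists_nat_gt (C / δ)
    refine ⟨n, ?_⟩
    have h1 : C < n * δ := by rwa [div_lt_iff₀ hδpos] at hn
    calc ENNReal.ofReal C < ENNReal.ofReal ((n : ℝ) * δ) :=
          (ENNReal.ofReal_lt_ofReal_iff (by linarith)).2 h1
      _ = (n : ℝ≥0∞) * ENNReal.ofReal δ := by
          rw [ENNReal.ofReal_mul (Nat.cast_nonneg n), ENNReal.ofReal_natCast]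
  obtain ⟨n₀, hn₀⟩ := harch ((2 + 2*W) * (1 + 2*H)) (by positivity)
  obtain ⟨n₀', hn₀'⟩ := harch ((2 + 2*H) * (1 + 2*W)) (by positivity)
  set sz' : Fin k → ℝ × ℝ := fun j => ((sz j).2, (sz j).1) with hsz'def
  have hss : ∀ j, (sz' j).1 = (sz j).2 ∧ (sz' j).2 = (sz j).1 := fun j => ⟨rfl, rfl⟩
  have hss' : ∀ j, (sz j).1 = (sz' j).2 ∧ (sz j).2 = (sz' j).1 := fun j => ⟨rfl, rfl⟩
  have hsz2 : ∀ j, 0 < (sz' j).1 ∧ 0 < (sz' j).2 := fun j => ⟨(hsz j).2, (hsz j).1⟩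
  have hW' : ∀ j, (sz' j).1 ≤ H := fun j => hH j
  have hH' : ∀ j, (sz' j).2 ≤ W := fun j => hW j
  have hδle' : ∀ j, δ ≤ (sz' j).1 * (sz' j).2 := fun j => by
    calc δ ≤ (sz j).1 * (sz j).2 := hδle j
      _ = (sz' j).1 * (sz' j).2 := mul_comm _ _
  set Φ : Tilings sz → Tilings sz' := Φm hss with hΦdef
  have hΦ : Measurable Φ := measurable_Φm hss
  set Φ2 : Tilings sz' → Tilings sz := Φm hss' with hΦ2def
  have hΦ2 : Measurable Φ2 := measurable_Φm hss'
  set μ' : Measure (Tilings sz') := μ.map Φ with hμ'def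
  have hprob' : IsProbabilityMeasure μ' := Measure.isProbabilityMeasure_map hΦ.aemeasurable
  have hSid : ∀ v : Pt, S sz' v = Φ ∘ S sz v.swap ∘ Φ2 := by
    intro v; funext x'
    have e1 : Φ (S sz v.swap (Φ2 x')) = S sz' v.swap.swap (Φ (Φ2 x')) := Φm_S hss v.swap _
    have e2 : Φ (Φ2 x') = x' := Subtype.ext (ΦP_ΦP x'.val)
    simp only [Function.comp_apply, e1, e2, Prod.swap_swap]
  have hinv' : ∀ v : Pt, MeasurePreserving (S sz' v) μ' μ' := by
    intro v
    have hmeas : Measurable (S sz' v) := by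
      rw [hSid v]; exact hΦ.comp ((hinv v.swap).measurable.comp hΦ2)
    refine ⟨hmeas, ?_⟩
    show (μ.map Φ).map (S sz' v) = μ.map Φ
    rw [Measure.map_map hmeas hΦ]
    have hfe : S sz' v ∘ Φ = Φ ∘ S sz v.swap := by
      funext x
      have := Φm_S hss v.swap x
      rw [Prod.swap_swap] at this
      exact this.symm
    rw [hfe, ← Measure.map_map hΦ (hinv v.swap).measurable, (hinv v.swap).map_eq]
  have hergV' : ∀ E : Set (Tilings sz'), MeasurableSet E →
      (∀ t : ℝ, S sz' (0, t) ⁻¹' E = E) → μ' E = 0 ∨ μ' E = 1 := by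
    intro E hE hinvE
    rw [hμ'def, Measure.map_apply hΦ hE]
    refine hergH (Φ ⁻¹' E) (hΦ hE) ?_
    intro t
    ext x
    simp only [Set.mem_preimage]
    rw [show Φ (S sz (t, 0) x) = S sz' (0, t) (Φ x) from Φm_S hss (t, 0) x,
      ← Set.mem_preimage (f := S sz' (0, t)), hinvE t]
  have hnull1 : μ {x : Tilings sz | ∃ a : ℝ, a ∈ colUp sz x.val ∨ a ∈ colDn sz x.val} = 0 :=
    NV_null hsz hW hH hδpos hδle hW0 hH0 hn₀ μ hinv hergV
  have hnull2 : μ' {x : Tilings sz' | ∃ a : ℝ, a ∈ colUp sz' x.val ∨ a ∈ colDn sz' x.val} = 0 :=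
    NV_null hsz2 hW' hH' hδpos hδle' hH0 hW0 hn₀' μ' hinv' hergV'
  have hmeas1 : MeasurableSet
      {x : Tilings sz | ∃ a : ℝ, a ∈ colUp sz x.val ∨ a ∈ colDn sz x.val} := by
    rw [NVset_eq]
    exact MeasurableSet.iUnion fun i =>
      meas_BV hsz hW hH hδpos hδle hW0 hH0 (lt_add_one _)
  have hmeas2 : MeasurableSet
      {x : Tilings sz' | ∃ a : ℝ, a ∈ colUp sz' x.val ∨ a ∈ colDn sz' x.val} := by
    rw [NVset_eq]
    exact MeasurableSet.iUnion fun i =>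
      meas_BV hsz2 hW' hH' hδpos hδle' hH0 hW0 (lt_add_one _)
  refine ⟨{x : Tilings sz | ∃ a : ℝ, a ∈ colUp sz x.val ∨ a ∈ colDn sz x.val}
    ∪ Φ ⁻¹' {x : Tilings sz' | ∃ a : ℝ, a ∈ colUp sz' x.val ∨ a ∈ colDn sz' x.val},
    hmeas1.union (hΦ hmeas2), ?_, ?_⟩
  · refine measure_union_null hnull1 ?_
    rw [← Measure.map_apply hΦ hmeas2]
    exact hnull2
  · rintro x ⟨ℓ, hshear, hinf⟩
    have hsub : ℓ ⊆ bdry sz x.val := hshear.2.1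
    rcases hinf with (⟨y, a, hl | hl⟩ | ⟨c, b, hl | hl⟩) | (⟨y, hl⟩ | ⟨c, hl⟩)
    · refine Or.inr ⟨y, Or.inl ⟨a, fun u hu => ?_⟩⟩
      show (y, u) ∈ bdry sz' (ΦP x.val)
      rw [mem_bdry_swap hss hsz]
      exact hsub (by rw [hl]; exact ⟨hu, rfl⟩)
    · refine Or.inr ⟨y, Or.inr ⟨a, fun u hu => ?_⟩⟩
      show (y, u) ∈ bdry sz' (ΦP x.val)
      rw [mem_bdry_swap hss hsz]
      exact hsub (by rw [hl]; exact ⟨hu, rfl⟩)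
    · exact Or.inl ⟨c, Or.inl ⟨b, fun u hu => hsub (by rw [hl]; exact ⟨rfl, hu⟩)⟩⟩
    · exact Or.inl ⟨c, Or.inr ⟨b, fun u hu => hsub (by rw [hl]; exact ⟨rfl, hu⟩)⟩⟩
    · refine Or.inr ⟨y, Or.inl ⟨0, fun u hu => ?_⟩⟩
      show (y, u) ∈ bdry sz' (ΦP x.val)
      rw [mem_bdry_swap hss hsz]
      exact hsub (by rw [hl]; exact ⟨trivial, rfl⟩)
    · exact Or.inl ⟨c, Or.inl ⟨0, fun u hu => hsub (by rw [hl]; exact ⟨rfl, trivial⟩)⟩⟩
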